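/- arXiv:1906.01405 — 2 statements merged into one kernel-verified Lean document; each statement's English description precedes it below -/
import Mathlib

section
/- Let (Ω, 𝓕, μ) be a probability space, n, m ≥ 1, and let f ∈ L²(Ω^n, μ^⊗n) have mean zero (E f = 0). Define F ∈ L²(Ω^{mn}, μ^⊗mn) by F(x) = Π_{i=1}^m f(x_{(i−1)n+1}, …, x_{in}) (the m-fold tensor power of f on consecutive blocks of n coordinates). Then P_m F = (P_1 f)^{⊗ m}, i.e. (P_m F)(x) = Π_{i=1}^m (P_1 f)(x_{(i−1)n+1}, …, x_{in}) almost everywhere. -/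
open MeasureTheory
open scoped NNReal ENNReal

noncomputable def piMeasure {Ω : Type*} [MeasurableSpace Ω] (μ : Measure Ω) (N : ℕ) :
    Measure (Fin N → Ω) := Measure.pi fun _ => μ

def coordSigma (Ω : Type*) [MeasurableSpace Ω] (N : ℕ) (B : Finset (Fin N)) :
    MeasurableSpace (Fin N → Ω) :=
  ⨆ i ∈ B, MeasurableSpace.comap (fun x => x i) inferInstance

/-- Conditional expectation `E_B` with respect to the coordinates in `B`. -/
noncomputable def condExpCoords {Ω : Type*} [MeasurableSpace Ω] (μ : Measure Ω) {N : ℕ}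
    {E : Type*} [NormedAddCommGroup E] [NormedSpace ℝ E] [CompleteSpace E]
    (B : Finset (Fin N)) (f : (Fin N → Ω) → E) : (Fin N → Ω) → E :=
  MeasureTheory.condExp (coordSigma Ω N B) (piMeasure μ N) f

/-- The Hoeffding projection `P_A f = Σ_{B ⊆ A} (−1)^{|A∖B|} E_B f`. -/
noncomputable def hoeffdingProj {Ω : Type*} [MeasurableSpace Ω] (μ : Measure Ω) {N : ℕ}
    {E : Type*} [NormedAddCommGroup E] [NormedSpace ℝ E] [CompleteSpace E]
    (A : Finset (Fin N)) (f : (Fin N → Ω) → E) : (Fin N → Ω) → E :=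
  ∑ B ∈ A.powerset, ((-1 : ℝ) ^ (A.card - B.card)) • condExpCoords μ B f

/-- `P_m f = Σ_{|A| = m} P_A f`. -/
noncomputable def hoeffdingSum {Ω : Type*} [MeasurableSpace Ω] (μ : Measure Ω) {N : ℕ}
    {E : Type*} [NormedAddCommGroup E] [NormedSpace ℝ E] [CompleteSpace E]
    (m : ℕ) (f : (Fin N → Ω) → E) : (Fin N → Ω) → E :=
  ∑ A ∈ Finset.univ.filter (fun A : Finset (Fin N) => A.card = m), hoeffdingProj μ A f

set_option linter.unusedSectionVars false
section Aux
variable {Ω : Type*} [MeasurableSpace Ω] (μ : Measure Ω) [IsProbabilityMeasure μ]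
instance piMeasure_prob (N : ℕ) : IsProbabilityMeasure (piMeasure μ N) := by
  rw [piMeasure]; infer_instance
lemma coordSigma_eq (N : ℕ) (B : Finset (Fin N)) :
    coordSigma Ω N B =
      MeasurableSpace.comap (fun (x : Fin N → Ω) (i : {j : Fin N // j ∈ B}) => x i)
        MeasurableSpace.pi := by
  rw [coordSigma, MeasurableSpace.pi, MeasurableSpace.comap_iSup]
  rw [iSup_subtype']
  congr 1
  ext i
  rw [MeasurableSpace.comap_comp]
lemma coordSigma_le (N : ℕ) (B : Finset (Fin N)) :
    coordSigma Ω N B ≤ (MeasurableSpace.pi : MeasurableSpace (Fin N → Ω)) :=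
  iSup₂_le fun i _ => measurable_iff_comap_le.mp (measurable_pi_apply i)
noncomputable def gB {N : ℕ} (B : Finset (Fin N)) (f : (Fin N → Ω) → ℝ) :
    (Fin N → Ω) → ℝ :=
  fun x => ∫ y, f (fun j => if j ∈ B then x j else y j) ∂(piMeasure μ N)

lemma gB_empty {N : ℕ} (f : (Fin N → Ω) → ℝ) (hmean : ∫ x, f x ∂(piMeasure μ N) = 0) :
    gB μ (∅ : Finset (Fin N)) f = 0 := by
  funext x
  simp only [gB, Finset.notMem_empty, if_false]
  exact hmean

lemma measurePreserving_eval {ι : Type*} [Fintype ι] [DecidableEq ι] {α : ι → Type*}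
    [∀ i, MeasurableSpace (α i)] (ν : ∀ i, Measure (α i)) [∀ i, IsProbabilityMeasure (ν i)]
    (i : ι) : MeasurePreserving (Function.eval i) (Measure.pi ν) (ν i) := by
  refine ⟨measurable_pi_apply i, ?_⟩
  ext s hs
  rw [Measure.map_apply (measurable_pi_apply i) hs, Set.eval_preimage,
    Measure.pi_pi]
  rw [Finset.prod_eq_single i (fun j _ hj => by simp [Function.update_of_ne hj]) (by simp)]
  simp

lemma condexp_eq_gB {N : ℕ} (B : Finset (Fin N)) {f : (Fin N → Ω) → ℝ}
    (hfm : StronglyMeasurable f) (hfi : Integrable f (piMeasure μ N)) :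
    condExpCoords μ B f =ᵐ[piMeasure μ N] gB μ B f := by
  classical
  set e := MeasurableEquiv.piEquivPiSubtypeProd (π := fun _ : Fin N => Ω)
    (fun j => j ∈ B) with he
  set ν1 : Measure ({j : Fin N // j ∈ B} → Ω) := Measure.pi fun _ => μ with hν1
  set ν2 : Measure ({j : Fin N // ¬ j ∈ B} → Ω) := Measure.pi fun _ => μ with hν2
  haveI : IsProbabilityMeasure ν1 := by rw [hν1]; infer_instance
  haveI : IsProbabilityMeasure ν2 := by rw [hν2]; infer_instance
  have e_mp : MeasurePreserving e (piMeasure μ N) (ν1.prod ν2) := by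
    have h0 := measurePreserving_piEquivPiSubtypeProd (fun _ : Fin N => μ)
      (fun j : Fin N => j ∈ B)
    simp only [he, hν1, hν2, piMeasure]
    convert h0 using 2
    congr!
  set f1 : ({j : Fin N // j ∈ B} → Ω) × ({j : Fin N // ¬ j ∈ B} → Ω) → ℝ :=
    fun z => f (e.symm z) with hf1
  have hf1m : StronglyMeasurable f1 := hfm.comp_measurable e.symm.measurable
  have hf1e : ∀ x, f1 (e x) = f x := fun x => by rw [hf1]; simp
  have hf1i : Integrable f1 (ν1.prod ν2) := by
    rw [← e_mp.integrable_comp_emb e.measurableEmbedding]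
    exact hfi.congr (Filter.Eventually.of_forall fun x => (hf1e x).symm)
  set h : ({j : Fin N // j ∈ B} → Ω) → ℝ := fun a => ∫ b, f1 (a, b) ∂ν2 with hh
  have hh_sm : StronglyMeasurable h := hf1m.integral_prod_right'
  have hh_int : Integrable h ν1 := hf1i.integral_prod_left
  set r : (Fin N → Ω) → ({j : Fin N // j ∈ B} → Ω) := fun x i => x i with hr
  set r' : (Fin N → Ω) → ({j : Fin N // ¬ j ∈ B} → Ω) := fun x i => x i with hr'
  have fst_mp : MeasurePreserving Prod.fst (ν1.prod ν2) ν1 :=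
    ⟨measurable_fst, by rw [Measure.map_fst_prod, measure_univ, one_smul]⟩
  have snd_mp : MeasurePreserving Prod.snd (ν1.prod ν2) ν2 :=
    ⟨measurable_snd, by rw [Measure.map_snd_prod, measure_univ, one_smul]⟩
  have r_mp : MeasurePreserving r (piMeasure μ N) ν1 := fst_mp.comp e_mp
  have r'_mp : MeasurePreserving r' (piMeasure μ N) ν2 := snd_mp.comp e_mp
  have key : ∀ x y : Fin N → Ω,
      f (fun j => if j ∈ B then x j else y j) = f1 (r x, r' y) := by
    intro x y
    have harg : (fun j => if j ∈ B then x j else y j) = e.symm (r x, r' y) := by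
      funext j
      by_cases hj : j ∈ B <;>
        simp [he, MeasurableEquiv.piEquivPiSubtypeProd, Equiv.piEquivPiSubtypeProd, hj, hr, hr']
    rw [hf1, harg]
  have gB_eq : gB μ B f = fun x => h (r x) := by
    funext x
    simp only [gB]
    simp_rw [key x]
    have hstep : ∫ y, f1 (r x, r' y) ∂(piMeasure μ N) = ∫ b, f1 (r x, b) ∂ν2 := by
      rw [← r'_mp.map_eq]
      exact (integral_map r'_mp.measurable.aemeasurable
        ((hf1m.comp_measurable measurable_prodMk_left).aestronglyMeasurable)).symm
    rw [hstep]
  have hr_meas : @Measurable _ _ (coordSigma Ω N B) _ r := by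
    rw [coordSigma_eq]
    exact measurable_iff_comap_le.mpr le_rfl
  have hm := coordSigma_le (Ω := Ω) N B
  haveI : SigmaFinite ((piMeasure μ N).trim hm) := by
    have : IsFiniteMeasure ((piMeasure μ N).trim hm) := isFiniteMeasure_trim hm
    infer_instance
  refine (ae_eq_condExp_of_forall_setIntegral_eq hm hfi ?_ ?_ ?_).symm
  · intro s _ _
    rw [gB_eq]
    exact ((r_mp.integrable_comp hh_sm.aestronglyMeasurable).mpr hh_int).integrableOn
  · intro s hs _
    rw [coordSigma_eq] at hs
    obtain ⟨t, ht, rfl⟩ := hs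
    have h1 : ∫ x in r ⁻¹' t, gB μ B f x ∂(piMeasure μ N) = ∫ a in t, h a ∂ν1 := by
      rw [gB_eq, ← r_mp.map_eq, setIntegral_map ht hh_sm.aestronglyMeasurable
        r_mp.measurable.aemeasurable]
    have h2 : r ⁻¹' t = e ⁻¹' (t ×ˢ Set.univ) := by
      ext x
      simp only [Set.mem_preimage, Set.mem_prod, Set.mem_univ, and_true]
      exact Iff.rfl

    have h3 : ∫ x in r ⁻¹' t, f x ∂(piMeasure μ N)
        = ∫ z in t ×ˢ Set.univ, f1 z ∂(ν1.prod ν2) := by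
      rw [h2, ← e_mp.map_eq, setIntegral_map (ht.prod MeasurableSet.univ)
        hf1m.aestronglyMeasurable e_mp.measurable.aemeasurable]
      exact setIntegral_congr_fun (e_mp.measurable (ht.prod MeasurableSet.univ))
        fun x _ => (hf1e x).symm
    rw [h1, h3, setIntegral_prod _ hf1i.integrableOn]
    simp [hh, Measure.restrict_univ]
  · rw [gB_eq]
    exact (hh_sm.comp_measurable hr_meas).aestronglyMeasurable
end Aux
section Blocks

variable {Ω : Type*} [MeasurableSpace Ω] (μ : Measure Ω) [IsProbabilityMeasure μ]
variable {n m : ℕ}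

lemma blk_lt (i : Fin m) (j : Fin n) : (i : ℕ) * n + (j : ℕ) < m * n := by
    have h1 : (i : ℕ) + 1 ≤ m := i.isLt
    have h2 : (j : ℕ) < n := j.isLt
    calc (i : ℕ) * n + (j : ℕ) < (i : ℕ) * n + n := by omega
      _ = ((i : ℕ) + 1) * n := by ring
      _ ≤ m * n := Nat.mul_le_mul_right n h1

def blk (n m : ℕ) (i : Fin m) (j : Fin n) : Fin (m * n) :=
  ⟨(i : ℕ) * n + (j : ℕ), blk_lt i j⟩

lemma blk_inj {i i' : Fin m} {j j' : Fin n} (h : blk n m i j = blk n m i' j') :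
    i = i' ∧ j = j' := by
  have hv : (i : ℕ) * n + (j : ℕ) = (i' : ℕ) * n + (j' : ℕ) := congrArg Fin.val h
  have hj : (j : ℕ) < n := j.isLt
  have hj' : (j' : ℕ) < n := j'.isLt
  have hii : (i : ℕ) = (i' : ℕ) ∧ (j : ℕ) = (j' : ℕ) := by
    rcases Nat.lt_trichotomy (i : ℕ) (i' : ℕ) with hlt | heq | hgt
    · exfalso
      have h1 : (i : ℕ) * n + n ≤ (i' : ℕ) * n := by
        calc (i : ℕ) * n + n = ((i : ℕ) + 1) * n := by ring
          _ ≤ (i' : ℕ) * n := Nat.mul_le_mul_right n hlt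
      linarith
    · constructor
      · exact heq
      · rw [heq] at hv; omega
    · exfalso
      have h1 : (i' : ℕ) * n + n ≤ (i : ℕ) * n := by
        calc (i' : ℕ) * n + n = ((i' : ℕ) + 1) * n := by ring
          _ ≤ (i : ℕ) * n := Nat.mul_le_mul_right n hgt
      linarith
  exact ⟨Fin.ext hii.1, Fin.ext hii.2⟩

lemma blk_eq_finProd (i : Fin m) (j : Fin n) :
    blk n m i j = finProdFinEquiv (i, j) := by
  apply Fin.ext
  simp [blk, finProdFinEquiv]
  ring

/-- Coordinates of `B` inside block `i`. -/
def BiSet (B : Finset (Fin (m * n))) (i : Fin m) : Finset (Fin n) :=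
  Finset.univ.filter (fun j => blk n m i j ∈ B)

/-- The transversal finset determined by `t`. -/
def Phi (t : Fin m → Fin n) : Finset (Fin (m * n)) :=
  Finset.image (fun i => blk n m i (t i)) Finset.univ

/-- Splitting into blocks as a map to the `m`-fold power of `Ω^n`. -/
def Tmap (n m : ℕ) (Ω : Type*) : (Fin (m * n) → Ω) → (Fin m → Fin n → Ω) :=
  fun y i j => y (blk n m i j)

lemma Tmap_measurable : Measurable (Tmap n m Ω) :=
  measurable_pi_lambda _ fun _ => measurable_pi_lambda _ fun _ => measurable_pi_apply _

lemma Tmap_mp :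
    MeasurePreserving (Tmap n m Ω) (piMeasure μ (m * n))
      (Measure.pi fun _ : Fin m => piMeasure μ n) := by
  refine ⟨Tmap_measurable, ?_⟩
  refine (Measure.pi_eq_generateFrom (C := fun _ : Fin m =>
      Set.pi Set.univ '' Set.pi Set.univ fun _ : Fin n => { s : Set Ω | MeasurableSet s })
    (fun _ => generateFrom_pi) (fun _ => isPiSystem_pi) (fun _ => ?_) ?_).symm
  · exact ⟨fun _ => Set.univ,
      fun _ => ⟨fun _ => Set.univ, fun _ _ => MeasurableSet.univ, by simp⟩,
      fun _ => by simp [measure_lt_top], by simp [Set.iUnion_const]⟩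
  · intro s hs
    choose t ht hst using fun i => hs i
    have hts : ∀ i, s i = Set.pi Set.univ (t i) := fun i => (hst i).symm
    have htm : ∀ i j, MeasurableSet (t i j) := fun i j => ht i j (Set.mem_univ j)
    have hsm : ∀ i, MeasurableSet (s i) := by
      intro i
      rw [hts i]
      exact MeasurableSet.univ_pi fun j => htm i j
    rw [Measure.map_apply Tmap_measurable (MeasurableSet.univ_pi hsm)]
    have hpre : Tmap n m Ω ⁻¹' Set.pi Set.univ s =
        Set.pi Set.univ (fun k : Fin (m * n) =>
          t (finProdFinEquiv.symm k).1 (finProdFinEquiv.symm k).2) := by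
      ext y
      simp only [Set.mem_preimage, Set.mem_pi, Set.mem_univ, true_implies]
      constructor
      · intro hy k
        have := hy (finProdFinEquiv.symm k).1
        rw [hts] at this
        have h2 := this (finProdFinEquiv.symm k).2 (Set.mem_univ _)
        have h3 : y (blk n m (finProdFinEquiv.symm k).1 (finProdFinEquiv.symm k).2) ∈
            t (finProdFinEquiv.symm k).1 (finProdFinEquiv.symm k).2 := h2
        rw [blk_eq_finProd] at h3
        rwa [Prod.mk.eta, Equiv.apply_symm_apply] at h3
      · intro hy i
        rw [hts]
        intro j _
        show y (blk n m i j) ∈ t i j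
        have h4 := hy (blk n m i j)
        rw [show finProdFinEquiv.symm (blk n m i j) = (i, j) by
          rw [blk_eq_finProd]; exact Equiv.symm_apply_apply _ _] at h4
        exact h4
    rw [hpre, piMeasure, Measure.pi_pi]
    have hchange : ∀ p : Fin m × Fin n,
        μ (t (finProdFinEquiv.symm (finProdFinEquiv p)).1
            (finProdFinEquiv.symm (finProdFinEquiv p)).2) = μ (t p.1 p.2) := by
      intro p; rw [Equiv.symm_apply_apply]
    calc (∏ k : Fin (m * n), μ (t (finProdFinEquiv.symm k).1 (finProdFinEquiv.symm k).2))
        = ∏ p : Fin m × Fin n, μ (t p.1 p.2) := by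
          rw [← Equiv.prod_comp finProdFinEquiv
            (fun k => μ (t (finProdFinEquiv.symm k).1 (finProdFinEquiv.symm k).2))]
          exact Finset.prod_congr rfl fun p _ => hchange p
      _ = ∏ i : Fin m, ∏ j : Fin n, μ (t i j) := Fintype.prod_prod_type _
      _ = ∏ i : Fin m, piMeasure μ n (s i) := by
          refine Finset.prod_congr rfl fun i _ => ?_
          rw [hts i, piMeasure, Measure.pi_pi]

lemma bl_mp (i : Fin m) :
    MeasurePreserving (fun y : Fin (m * n) → Ω => fun j => y (blk n m i j))
      (piMeasure μ (m * n)) (piMeasure μ n) :=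
  (_root_.measurePreserving_eval (fun _ : Fin m => piMeasure μ n) i).comp (Tmap_mp μ)

end Blocks
section Blocks2

variable {Ω : Type*} [MeasurableSpace Ω] (μ : Measure Ω) [IsProbabilityMeasure μ]
variable {n m : ℕ}

lemma gB_prod (B : Finset (Fin (m * n))) {f : (Fin n → Ω) → ℝ}
    (hfm : StronglyMeasurable f) (x : Fin (m * n) → Ω) :
    gB μ B (fun y => ∏ i : Fin m, f (fun j => y (blk n m i j))) x
      = ∏ i : Fin m, gB μ (BiSet B i) f (fun j => x (blk n m i j)) := by
  classical
  set φ : Fin m → (Fin n → Ω) → ℝ := fun i z =>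
    f (fun j => if j ∈ BiSet B i then x (blk n m i j) else z j) with hφ
  have hφm : ∀ i, Measurable (φ i) := by
    intro i
    apply hfm.measurable.comp
    apply measurable_pi_lambda
    intro j
    by_cases hj : j ∈ BiSet B i <;> simp only [hj, if_true, if_false]
    · exact measurable_const
    · exact measurable_pi_apply j
  have hstep1 : ∀ y : Fin (m * n) → Ω,
      (∏ i : Fin m, f (fun j => (fun k => if k ∈ B then x k else y k) (blk n m i j)))
        = ∏ i : Fin m, φ i (Tmap n m Ω y i) := by
    intro y
    refine Finset.prod_congr rfl fun i _ => ?_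
    congr 1
    funext j
    have : (j ∈ BiSet B i) = (blk n m i j ∈ B) := by simp [BiSet]
    simp only [Tmap, this]
  simp only [gB]
  rw [show (fun y : Fin (m * n) → Ω =>
      (fun y' => ∏ i : Fin m, f (fun j => y' (blk n m i j)))
        (fun j => if j ∈ B then x j else y j)) = fun y => ∏ i : Fin m, φ i (Tmap n m Ω y i)
    from funext fun y => hstep1 y]
  have hGm : Measurable (fun w : Fin m → Fin n → Ω => ∏ i : Fin m, φ i (w i)) := by
    apply Finset.measurable_prod
    intro i _
    exact (hφm i).comp (measurable_pi_apply i)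
  have hstep2 : ∫ y, ∏ i : Fin m, φ i (Tmap n m Ω y i) ∂(piMeasure μ (m * n))
      = ∫ w, ∏ i : Fin m, φ i (w i) ∂(Measure.pi fun _ : Fin m => piMeasure μ n) := by
    rw [← (Tmap_mp μ).map_eq]
    exact (integral_map (Tmap_mp μ).measurable.aemeasurable
      hGm.aestronglyMeasurable).symm
  rw [hstep2]
  have hstep3 : ∫ w, ∏ i : Fin m, φ i (w i) ∂(Measure.pi fun _ : Fin m => piMeasure μ n)
      = ∏ i : Fin m, ∫ z, φ i z ∂(piMeasure μ n) := by
    letI : MeasureSpace (Fin n → Ω) := ⟨piMeasure μ n⟩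
    haveI : IsProbabilityMeasure (volume : Measure (Fin n → Ω)) := piMeasure_prob μ n
    exact MeasureTheory.integral_fintype_prod_eq_prod φ
  rw [hstep3]

lemma prod_blocks_stronglyMeasurable {f : (Fin n → Ω) → ℝ} (hfm : StronglyMeasurable f) :
    StronglyMeasurable (fun y : Fin (m * n) → Ω => ∏ i : Fin m, f (fun j => y (blk n m i j))) := by
  apply Measurable.stronglyMeasurable
  apply Finset.measurable_prod
  intro i _
  exact hfm.measurable.comp (measurable_pi_lambda _ fun j => measurable_pi_apply _)

lemma prod_blocks_integrable {f : (Fin n → Ω) → ℝ} (hfm : StronglyMeasurable f)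
    (hfi : Integrable f (piMeasure μ n)) :
    Integrable (fun y : Fin (m * n) → Ω => ∏ i : Fin m, f (fun j => y (blk n m i j)))
      (piMeasure μ (m * n)) := by
  have hG : Integrable (fun w : Fin m → Fin n → Ω => ∏ i : Fin m, f (w i))
      (Measure.pi fun _ : Fin m => piMeasure μ n) := by
    letI : MeasureSpace (Fin n → Ω) := ⟨piMeasure μ n⟩
    haveI : IsProbabilityMeasure (volume : Measure (Fin n → Ω)) := piMeasure_prob μ n
    exact MeasureTheory.Integrable.fintype_prod (f := fun _ : Fin m => f) fun _ => hfi
  have := ((Tmap_mp (n := n) (m := m) μ).integrable_comp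
    hG.aestronglyMeasurable).mpr hG
  exact this

lemma card_Phi (t : Fin m → Fin n) : (Phi t).card = m := by
  rw [Phi, Finset.card_image_of_injective _ (fun i i' h => (blk_inj h).1)]
  simp

lemma comb (w : Finset (Fin (m * n)) → ℝ)
    (hw : ∀ B : Finset (Fin (m * n)), ∀ i : Fin m, BiSet B i = ∅ → w B = 0) :
    ∑ A ∈ Finset.univ.filter (fun A : Finset (Fin (m * n)) => A.card = m),
      ∑ B ∈ A.powerset, (-1 : ℝ) ^ (A.card - B.card) * w B
    = ∑ t : Fin m → Fin n, w (Phi t) := by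
  classical
  rw [← Finset.sum_fiberwise_of_maps_to (g := fun t : Fin m → Fin n => Phi t)
    (t := Finset.univ.filter (fun A : Finset (Fin (m * n)) => A.card = m))
    (fun t _ => by simp [Finset.mem_filter, card_Phi]) (fun t => w (Phi t))]
  refine Finset.sum_congr rfl fun A hA => ?_
  have hAcard : A.card = m := (Finset.mem_filter.mp hA).2
  by_cases hA2 : ∀ i : Fin m, ∃ j : Fin n, blk n m i j ∈ A
  · choose t0 ht0 using hA2
    have hPhiA : Phi t0 = A := by
      apply Finset.eq_of_subset_of_card_le
      · intro k hk
        obtain ⟨i, _, rfl⟩ := Finset.mem_image.mp hk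
        exact ht0 i
      · rw [hAcard, card_Phi]
    have hfiber : Finset.univ.filter (fun t : Fin m → Fin n => Phi t = A) = {t0} := by
      ext t
      simp only [Finset.mem_filter, Finset.mem_univ, true_and, Finset.mem_singleton]
      constructor
      · intro ht
        funext i
        have hmem : blk n m i (t i) ∈ Phi t0 := by
          rw [hPhiA, ← ht, Phi]
          exact Finset.mem_image.mpr ⟨i, Finset.mem_univ i, rfl⟩
        obtain ⟨i', _, hik⟩ := Finset.mem_image.mp hmem
        obtain ⟨hii, hjj⟩ := blk_inj hik
        rw [hii] at hjj
        exact hjj.symm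
      · rintro rfl
        exact hPhiA
    rw [hfiber, Finset.sum_singleton, hPhiA]
    rw [Finset.sum_eq_single_of_mem A (Finset.mem_powerset_self A)]
    · simp
    · intro B hB hBA
      have hBsub := Finset.mem_powerset.mp hB
      obtain ⟨k, hkA, hkB⟩ : ∃ k, k ∈ A ∧ k ∉ B := by
        by_contra hcon
        push_neg at hcon
        exact hBA (Finset.Subset.antisymm hBsub hcon)
      obtain ⟨i, rfl⟩ : ∃ i, k = blk n m i (t0 i) := by
        rw [← hPhiA, Phi] at hkA
        obtain ⟨i, _, hik⟩ := Finset.mem_image.mp hkA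
        exact ⟨i, hik.symm⟩
      have hBi : BiSet B i = ∅ := by
        ext j
        simp only [BiSet, Finset.mem_filter, Finset.mem_univ, true_and,
          Finset.notMem_empty, iff_false]
        intro hj
        have hjA : blk n m i j ∈ A := hBsub hj
        rw [← hPhiA, Phi] at hjA
        obtain ⟨i', _, hik⟩ := Finset.mem_image.mp hjA
        obtain ⟨hii, hjj⟩ := blk_inj hik
        rw [hii] at hjj
        rw [← hjj] at hj
        exact hkB hj
      rw [hw B i hBi, mul_zero]
  · push_neg at hA2
    obtain ⟨i0, hi0⟩ := hA2
    have h1 : ∑ B ∈ A.powerset, (-1 : ℝ) ^ (A.card - B.card) * w B = 0 := by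
      refine Finset.sum_eq_zero fun B hB => ?_
      have hBsub := Finset.mem_powerset.mp hB
      have hBi : BiSet B i0 = ∅ := by
        ext j
        simp only [BiSet, Finset.mem_filter, Finset.mem_univ, true_and,
          Finset.notMem_empty, iff_false]
        exact fun hj => hi0 j (hBsub hj)
      rw [hw B i0 hBi, mul_zero]
    have h2 : Finset.univ.filter (fun t : Fin m → Fin n => Phi t = A) = ∅ := by
      ext t
      simp only [Finset.mem_filter, Finset.mem_univ, true_and, Finset.notMem_empty,
        iff_false]
      intro ht
      exact hi0 (t i0) (by rw [← ht, Phi]; exact Finset.mem_image.mpr ⟨i0, Finset.mem_univ i0, rfl⟩)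
    rw [h1, h2, Finset.sum_empty]

lemma BiSet_Phi (t : Fin m → Fin n) (i : Fin m) : BiSet (Phi t) i = {t i} := by
  ext j
  constructor
  · intro hj
    have hj' : blk n m i j ∈ Phi t := (Finset.mem_filter.mp hj).2
    obtain ⟨i', _, hik⟩ := Finset.mem_image.mp hj'
    obtain ⟨hii, hjj⟩ := blk_inj hik
    rw [hii] at hjj
    exact Finset.mem_singleton.mpr hjj.symm
  · intro hj
    rw [Finset.mem_singleton] at hj
    subst hj
    exact Finset.mem_filter.mpr ⟨Finset.mem_univ _,
      Finset.mem_image.mpr ⟨i, Finset.mem_univ i, rfl⟩⟩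

end Blocks2
section Hsum

variable {Ω : Type*} [MeasurableSpace Ω] (μ : Measure Ω) [IsProbabilityMeasure μ]
variable {n m : ℕ}

lemma hoeffdingSum_one {f f' : (Fin n → Ω) → ℝ} (hf'm : StronglyMeasurable f')
    (hf'i : Integrable f' (piMeasure μ n)) (hff' : f =ᵐ[piMeasure μ n] f')
    (hmean' : ∫ x, f' x ∂(piMeasure μ n) = 0) :
    hoeffdingSum μ 1 f =ᵐ[piMeasure μ n] fun z => ∑ a : Fin n, gB μ {a} f' z := by
  classical
  have hB : ∀ B : Finset (Fin n), condExpCoords μ B f =ᵐ[piMeasure μ n] gB μ B f' :=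
    fun B => (condExp_congr_ae hff').trans (condexp_eq_gB μ B hf'm hf'i)
  have hall : ∀ᵐ z ∂(piMeasure μ n), ∀ B : Finset (Fin n),
      condExpCoords μ B f z = gB μ B f' z := ae_all_iff.mpr hB
  filter_upwards [hall] with z hz
  have himg : Finset.univ.filter (fun A : Finset (Fin n) => A.card = 1)
      = Finset.univ.image (fun a : Fin n => ({a} : Finset (Fin n))) := by
    ext A
    simp [Finset.card_eq_one, eq_comm]
  simp only [hoeffdingSum, Finset.sum_apply]
  rw [himg, Finset.sum_image (fun a _ b _ h => Finset.singleton_injective h)]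
  refine Finset.sum_congr rfl fun a _ => ?_
  simp only [hoeffdingProj, Finset.sum_apply, Pi.smul_apply, smul_eq_mul]
  have hpow : ({a} : Finset (Fin n)).powerset = {∅, {a}} := by
    ext B
    simp [Finset.subset_singleton_iff]
  rw [hpow, Finset.sum_insert (by
    intro h
    exact (Finset.singleton_ne_empty a) (Finset.mem_singleton.mp h).symm),
    Finset.sum_singleton]
  rw [hz ∅, hz {a}, gB_empty μ f' hmean']
  simp

theorem hoeffding_tensor_power_aux (hn : 1 ≤ n) (hm : 1 ≤ m)
    (f : (Fin n → Ω) → ℝ) (hf : MemLp f 2 (piMeasure μ n))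
    (hmean : ∫ x, f x ∂(piMeasure μ n) = 0)
    (F : (Fin (m * n) → Ω) → ℝ)
    (hF : F = fun x => ∏ i : Fin m, f (fun j : Fin n => x (blk n m i j))) :
    hoeffdingSum μ m F =ᵐ[piMeasure μ (m * n)]
      fun x => ∏ i : Fin m, (hoeffdingSum μ 1 f) (fun j : Fin n => x (blk n m i j)) := by
  classical
  have hfasm : AEStronglyMeasurable f (piMeasure μ n) := hf.aestronglyMeasurable
  set f' : (Fin n → Ω) → ℝ := hfasm.mk f with hf'def
  have hf'm : StronglyMeasurable f' := hfasm.stronglyMeasurable_mk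
  have hff' : f =ᵐ[piMeasure μ n] f' := hfasm.ae_eq_mk
  have hfi : Integrable f (piMeasure μ n) := hf.integrable one_le_two
  have hf'i : Integrable f' (piMeasure μ n) := hfi.congr hff'
  have hmean' : ∫ x, f' x ∂(piMeasure μ n) = 0 := by
    rw [← integral_congr_ae hff']
    exact hmean
  set F' : (Fin (m * n) → Ω) → ℝ :=
    fun y => ∏ i : Fin m, f' (fun j => y (blk n m i j)) with hF'def
  have hF'm : StronglyMeasurable F' := prod_blocks_stronglyMeasurable hf'm
  have hF'i : Integrable F' (piMeasure μ (m * n)) := prod_blocks_integrable μ hf'm hf'i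
  have hFF' : F =ᵐ[piMeasure μ (m * n)] F' := by
    have h1 : ∀ i : Fin m, ∀ᵐ y ∂(piMeasure μ (m * n)),
        f (fun j => y (blk n m i j)) = f' (fun j => y (blk n m i j)) := fun i =>
      (bl_mp μ i).quasiMeasurePreserving.ae_eq_comp hff'
    have h2 := ae_all_iff.mpr h1
    filter_upwards [h2] with y hy
    rw [hF, hF'def]
    exact Finset.prod_congr rfl fun i _ => hy i
  have hcondF : ∀ᵐ x ∂(piMeasure μ (m * n)), ∀ B : Finset (Fin (m * n)),
      condExpCoords μ B F x = gB μ B F' x :=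
    ae_all_iff.mpr fun B => (condExp_congr_ae hFF').trans (condexp_eq_gB μ B hF'm hF'i)
  have hS := hoeffdingSum_one μ hf'm hf'i hff' hmean'
  have hSall : ∀ᵐ x ∂(piMeasure μ (m * n)), ∀ i : Fin m,
      hoeffdingSum μ 1 f (fun j => x (blk n m i j))
        = ∑ a : Fin n, gB μ {a} f' (fun j => x (blk n m i j)) :=
    ae_all_iff.mpr fun i => (bl_mp μ i).quasiMeasurePreserving.ae_eq_comp hS
  filter_upwards [hcondF, hSall] with x hx hsx
  calc hoeffdingSum μ m F x
      = ∑ A ∈ Finset.univ.filter (fun A : Finset (Fin (m * n)) => A.card = m),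
          ∑ B ∈ A.powerset, (-1 : ℝ) ^ (A.card - B.card) * condExpCoords μ B F x := by
        simp only [hoeffdingSum, hoeffdingProj, Finset.sum_apply, Pi.smul_apply, smul_eq_mul]
    _ = ∑ A ∈ Finset.univ.filter (fun A : Finset (Fin (m * n)) => A.card = m),
          ∑ B ∈ A.powerset, (-1 : ℝ) ^ (A.card - B.card) *
            (∏ i : Fin m, gB μ (BiSet B i) f' (fun j => x (blk n m i j))) := by
        refine Finset.sum_congr rfl fun A _ => Finset.sum_congr rfl fun B _ => ?_
        rw [hx B, hF'def, gB_prod μ B hf'm x]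
    _ = ∑ t : Fin m → Fin n, ∏ i : Fin m, gB μ (BiSet (Phi t) i) f'
          (fun j => x (blk n m i j)) := by
        refine comb (fun B => ∏ i : Fin m, gB μ (BiSet B i) f' (fun j => x (blk n m i j))) ?_
        intro B i hBi
        refine Finset.prod_eq_zero (Finset.mem_univ i) ?_
        rw [hBi, gB_empty μ f' hmean']
        rfl
    _ = ∑ t : Fin m → Fin n, ∏ i : Fin m, gB μ {t i} f' (fun j => x (blk n m i j)) := by
        refine Finset.sum_congr rfl fun t _ => Finset.prod_congr rfl fun i _ => ?_
        rw [BiSet_Phi]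
    _ = ∏ i : Fin m, ∑ a : Fin n, gB μ {a} f' (fun j => x (blk n m i j)) := by
        rw [Finset.prod_univ_sum]
        rw [Fintype.piFinset_univ]
    _ = ∏ i : Fin m, hoeffdingSum μ 1 f (fun j => x (blk n m i j)) :=
        Finset.prod_congr rfl fun i _ => (hsx i).symm

end Hsum

/-- for mean-zero `f ∈ L²(Ω^n)` and `F = f^{⊗m}` on `Ω^{mn}` (blocks of `n`
consecutive coordinates), `P_m F = (P_1 f)^{⊗m}` almost everywhere. -/
theorem hoeffding_tensor_power (Ω : Type*) [MeasurableSpace Ω] (μ : Measure Ω)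
    [IsProbabilityMeasure μ] (n m : ℕ) (hn : 1 ≤ n) (hm : 1 ≤ m)
    (f : (Fin n → Ω) → ℝ) (hf : MemLp f 2 (piMeasure μ n))
    (hmean : ∫ x, f x ∂(piMeasure μ n) = 0)
    (F : (Fin (m * n) → Ω) → ℝ)
    (hF : F = fun x => ∏ i : Fin m, f (fun j : Fin n =>
      x ⟨(i : ℕ) * n + (j : ℕ), by
        have h1 : (i : ℕ) + 1 ≤ m := i.isLt
        have h2 : (j : ℕ) < n := j.isLt
        calc (i : ℕ) * n + (j : ℕ) < (i : ℕ) * n + n := by omega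
          _ = ((i : ℕ) + 1) * n := by ring
          _ ≤ m * n := Nat.mul_le_mul_right n h1⟩)) :
    hoeffdingSum μ m F =ᵐ[piMeasure μ (m * n)]
      fun x => ∏ i : Fin m, (hoeffdingSum μ 1 f) (fun j : Fin n =>
        x ⟨(i : ℕ) * n + (j : ℕ), by
          have h1 : (i : ℕ) + 1 ≤ m := i.isLt
          have h2 : (j : ℕ) < n := j.isLt
          calc (i : ℕ) * n + (j : ℕ) < (i : ℕ) * n + n := by omega
            _ = ((i : ℕ) + 1) * n := by ring
            _ ≤ m * n := Nat.mul_le_mul_right n h1⟩) := by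
  exact hoeffding_tensor_power_aux μ hn hm f hf hmean F hF
end

section
/- Let X₁,…,X_n be independent integrable real random variables on a probability space, and define constants λ₀ = 0 and λ_k = E√(X_k² + λ_{k−1}²) for k = 1,…,n. Then λ_n ≤ E√(Σ_{k=1}^n X_k²) ≤ 2 λ_n. -/
open MeasureTheory

private lemma sqrt_add_le' {a b : ℝ} (ha : 0 ≤ a) (hb : 0 ≤ b) :
    Real.sqrt (a + b) ≤ Real.sqrt a + Real.sqrt b := by
  have h : a + b ≤ (Real.sqrt a + Real.sqrt b) ^ 2 := by
    have h1 := Real.sq_sqrt ha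
    have h2 := Real.sq_sqrt hb
    nlinarith [Real.sqrt_nonneg a, Real.sqrt_nonneg b]
  calc Real.sqrt (a + b) ≤ Real.sqrt ((Real.sqrt a + Real.sqrt b) ^ 2) := Real.sqrt_le_sqrt h
    _ = Real.sqrt a + Real.sqrt b := Real.sqrt_sq (by positivity)

private lemma cs_div_le {a t s : ℝ} (ht : 0 ≤ t) (hs : 0 ≤ s) :
    (a ^ 2 + t * Real.sqrt s) / Real.sqrt (a ^ 2 + t ^ 2) ≤ Real.sqrt (a ^ 2 + s) := by
  rcases (by positivity : (0:ℝ) ≤ a ^ 2 + t ^ 2).eq_or_lt with h | h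
  · rw [← h, Real.sqrt_zero, div_zero]; positivity
  · have hD : 0 < Real.sqrt (a ^ 2 + t ^ 2) := Real.sqrt_pos.2 h
    rw [div_le_iff₀ hD]
    have hss := Real.sq_sqrt hs
    have key : (a ^ 2 + t * Real.sqrt s) ^ 2 ≤ (a ^ 2 + s) * (a ^ 2 + t ^ 2) := by
      nlinarith [sq_nonneg (a * t - a * Real.sqrt s), Real.sqrt_nonneg s]
    calc a ^ 2 + t * Real.sqrt s = Real.sqrt ((a ^ 2 + t * Real.sqrt s) ^ 2) :=
          (Real.sqrt_sq (by positivity)).symm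
      _ ≤ Real.sqrt ((a ^ 2 + s) * (a ^ 2 + t ^ 2)) := Real.sqrt_le_sqrt key
      _ = Real.sqrt (a ^ 2 + s) * Real.sqrt (a ^ 2 + t ^ 2) := Real.sqrt_mul (by positivity) _

private lemma sqrt_upper {s a lm : ℝ} (hs : 0 ≤ s) (hlm : 0 ≤ lm) :
    Real.sqrt (a ^ 2 + s) ≤ Real.sqrt (a ^ 2 + lm ^ 2) + max (Real.sqrt s - lm) 0 := by
  rcases le_total (Real.sqrt s) lm with h | h
  · have hs' : s ≤ lm ^ 2 := by
      have := Real.sq_sqrt hs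
      nlinarith [Real.sqrt_nonneg s]
    have h1 : Real.sqrt (a ^ 2 + s) ≤ Real.sqrt (a ^ 2 + lm ^ 2) :=
      Real.sqrt_le_sqrt (by linarith)
    have h0 : (0:ℝ) ≤ max (Real.sqrt s - lm) 0 := le_max_right _ _
    linarith
  · rw [max_eq_left (by linarith)]
    have hσ : Real.sqrt s ^ 2 = s := Real.sq_sqrt hs
    have hQ2 : Real.sqrt (a ^ 2 + lm ^ 2) ^ 2 = a ^ 2 + lm ^ 2 := Real.sq_sqrt (by positivity)
    have hQ0 : 0 ≤ Real.sqrt (a ^ 2 + lm ^ 2) := Real.sqrt_nonneg _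
    have hQlm : lm ≤ Real.sqrt (a ^ 2 + lm ^ 2) := by nlinarith
    have hR0 : 0 ≤ Real.sqrt (a ^ 2 + lm ^ 2) + Real.sqrt s - lm := by linarith
    calc Real.sqrt (a ^ 2 + s)
        ≤ Real.sqrt ((Real.sqrt (a ^ 2 + lm ^ 2) + Real.sqrt s - lm) ^ 2) := by
          refine Real.sqrt_le_sqrt ?_
          nlinarith [mul_nonneg (sub_nonneg.2 hQlm) (sub_nonneg.2 h)]
      _ = _ := by rw [Real.sqrt_sq hR0]; ring

private lemma indep_integral_eq {Ω : Type*} [MeasurableSpace Ω] {μ : Measure Ω}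
    [IsProbabilityMeasure μ] {A B : Ω → ℝ} (hA : Measurable A) (hB : Measurable B)
    (h : ProbabilityTheory.IndepFun A B μ) {φ : ℝ × ℝ → ℝ} (hφ : Continuous φ) :
    ∫ ω, φ (A ω, B ω) ∂μ = ∫ p, φ (A p.1, B p.2) ∂(μ.prod μ) := by
  have h1 : μ.map (fun ω => (A ω, B ω)) = (μ.map A).prod (μ.map B) :=
    (ProbabilityTheory.indepFun_iff_map_prod_eq_prod_map_map hA.aemeasurable hB.aemeasurable).mp h
  have h2 : (μ.prod μ).map (fun p : Ω × Ω => (A p.1, B p.2)) = (μ.map A).prod (μ.map B) := by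
    have h3 := Measure.map_prod_map μ μ hA hB
    have h4 : (Prod.map A B) = fun p : Ω × Ω => (A p.1, B p.2) := rfl
    rw [h4] at h3
    exact h3.symm
  calc ∫ ω, φ (A ω, B ω) ∂μ
      = ∫ q, φ q ∂(μ.map (fun ω => (A ω, B ω))) :=
        (integral_map (hA.prodMk hB).aemeasurable hφ.aestronglyMeasurable).symm
    _ = ∫ q, φ q ∂((μ.prod μ).map (fun p : Ω × Ω => (A p.1, B p.2))) := by rw [h1, h2]
    _ = ∫ p, φ (A p.1, B p.2) ∂(μ.prod μ) :=
        integral_map ((hA.comp measurable_fst).prodMk (hB.comp measurable_snd)).aemeasurable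
          hφ.aestronglyMeasurable

private lemma integral_posPart_symm {Ω : Type*} [MeasurableSpace Ω] {μ : Measure Ω}
    [IsProbabilityMeasure μ] {Y : Ω → ℝ} (hY : Integrable Y μ) {c : ℝ}
    (hc : c = ∫ ω, Y ω ∂μ) :
    ∫ ω, max (Y ω - c) 0 ∂μ = ∫ ω, max (c - Y ω) 0 ∂μ := by
  have h1 : Integrable (fun ω => max (Y ω - c) 0) μ := (hY.sub (integrable_const c)).pos_part
  have h2 : Integrable (fun ω => max (c - Y ω) 0) μ := ((integrable_const c).sub hY).pos_part
  have hpt : ∀ ω, max (Y ω - c) 0 - max (c - Y ω) 0 = Y ω - c := by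
    intro ω
    rcases le_total (Y ω) c with h | h
    · rw [max_eq_right (by linarith), max_eq_left (by linarith)]; ring
    · rw [max_eq_left (by linarith), max_eq_right (by linarith)]; ring
  have h3 : ∫ ω, (max (Y ω - c) 0 - max (c - Y ω) 0) ∂μ = 0 := by
    have : (fun ω => max (Y ω - c) 0 - max (c - Y ω) 0) = fun ω => Y ω - c := funext hpt
    rw [this, integral_sub hY (integrable_const c), integral_const]
    simp [hc]
  rw [integral_sub h1 h2] at h3
  linarith

open MeasureTheory
open scoped NNReal ENNReal

/-- for independent integrable random variables `X₁,…,X_n` and the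
constants `λ₀ = 0`, `λ_k = E√(X_k² + λ_{k−1}²)`, one has
`λ_n ≤ E√(Σ_k X_k²) ≤ 2λ_n`. -/
theorem telescoping_square_function_comparison
    (Ω : Type*) [MeasurableSpace Ω] (μ : Measure Ω) [IsProbabilityMeasure μ]
    (n : ℕ) (X : Fin n → Ω → ℝ)
    (hmeas : ∀ k, Measurable (X k))
    (hint : ∀ k, Integrable (X k) μ)
    (hindep : ProbabilityTheory.iIndepFun X μ)
    (lam : ℕ → ℝ) (h0 : lam 0 = 0)
    (hrec : ∀ k : Fin n, lam ((k : ℕ) + 1)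
      = ∫ ω, Real.sqrt ((X k ω) ^ 2 + (lam (k : ℕ)) ^ 2) ∂μ) :
    lam n ≤ ∫ ω, Real.sqrt (∑ k : Fin n, (X k ω) ^ 2) ∂μ ∧
      ∫ ω, Real.sqrt (∑ k : Fin n, (X k ω) ^ 2) ∂μ ≤ 2 * lam n := by
  classical
  set T : ℕ → Finset (Fin n) := fun m => Finset.univ.filter (fun j => (j : ℕ) < m) with hT
  set S : ℕ → Ω → ℝ := fun m ω => ∑ j ∈ T m, (X j ω) ^ 2 with hS
  have hSmeas : ∀ m, Measurable (S m) := fun m =>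
    Finset.measurable_sum _ (fun j _ => (hmeas j).pow_const 2)
  have hSnn : ∀ m ω, 0 ≤ S m ω := fun m ω => Finset.sum_nonneg fun j _ => sq_nonneg _
  have hknot : ∀ k : Fin n, k ∉ T (k : ℕ) := fun k => by simp [hT]
  have hSsucc : ∀ (k : Fin n) (ω : Ω), S ((k : ℕ) + 1) ω = (X k ω) ^ 2 + S (k : ℕ) ω := by
    intro k ω
    have hins : T ((k : ℕ) + 1) = insert k (T (k : ℕ)) := by
      ext j
      simp only [hT, Finset.mem_filter, Finset.mem_univ, true_and, Finset.mem_insert,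
        Fin.ext_iff]
      omega
    simp only [hS, hins, Finset.sum_insert (hknot k)]
  have hS0 : ∀ ω, S 0 ω = 0 := by
    intro ω
    have : T 0 = ∅ := by simp [hT]
    simp [hS, this]
  have hSn : ∀ ω, S n ω = ∑ k : Fin n, (X k ω) ^ 2 := by
    intro ω
    have : T n = Finset.univ := by
      ext j; simp [hT, j.isLt]
    simp [hS, this]
  -- independence
  have hZindep : ProbabilityTheory.iIndepFun
      (fun j : Fin n => (fun x : ℝ => x ^ 2) ∘ X j) μ :=
    hindep.comp _ (fun _ => measurable_id.pow_const 2)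
  have hindSX : ∀ k : Fin n,
      ProbabilityTheory.IndepFun (fun ω => (X k ω) ^ 2) (S (k : ℕ)) μ := by
    intro k
    have h := (hZindep.indepFun_finsetSum_of_notMem
      (fun j => (hmeas j).pow_const 2) (hknot k)).symm
    have hfun : (∑ j ∈ T (k : ℕ), ((fun x : ℝ => x ^ 2) ∘ X j)) = S (k : ℕ) := by
      funext ω
      simp [hS, Finset.sum_apply, Function.comp]
    rwa [hfun] at h
  -- integrability on product helpers
  have hfst : ∀ {f : Ω → ℝ}, Integrable f μ → Integrable (fun p : Ω × Ω => f p.1) (μ.prod μ) := by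
    intro f hf
    have := Integrable.mul_prod (ν := μ) hf (integrable_const (1 : ℝ))
    simpa using this
  have hsnd : ∀ {f : Ω → ℝ}, Integrable f μ → Integrable (fun p : Ω × Ω => f p.2) (μ.prod μ) := by
    intro f hf
    have := Integrable.mul_prod (μ := μ) (integrable_const (1 : ℝ)) hf
    simpa using this
  -- the grand induction
  have key : ∀ m, m ≤ n →
      Integrable (fun ω => Real.sqrt (S m ω)) μ ∧ 0 ≤ lam m ∧
      lam m ≤ ∫ ω, Real.sqrt (S m ω) ∂μ ∧
      (∫ ω, max (Real.sqrt (S m ω) - lam m) 0 ∂μ) ≤ lam m := by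
    intro m
    induction m with
    | zero =>
      intro _
      have h1 : (fun ω => Real.sqrt (S 0 ω)) = fun _ => (0 : ℝ) := by
        funext ω; rw [hS0 ω, Real.sqrt_zero]
      have h2 : (fun ω => max (Real.sqrt (S 0 ω) - lam 0) 0) = fun _ => (0 : ℝ) := by
        funext ω; rw [hS0 ω, Real.sqrt_zero, h0]; simp
      refine ⟨by rw [h1]; exact integrable_const 0, le_of_eq h0.symm, ?_, ?_⟩
      · rw [h1, h0]; simp
      · rw [h2, h0]; simp
    | succ m ih =>
      intro hm1
      have hmn : m < n := hm1
      obtain ⟨hSint, hlam0, hlow, hJ⟩ := ih (Nat.le_of_succ_le hm1)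
      set k : Fin n := ⟨m, hmn⟩ with hk
      have hXk : Measurable (X k) := hmeas k
      have hlamrec : lam (m + 1) = ∫ ω, Real.sqrt ((X k ω) ^ 2 + (lam m) ^ 2) ∂μ := hrec k
      -- integrability of √(Xk² + c²)
      have hint_sqc : ∀ c : ℝ, Integrable (fun ω => Real.sqrt ((X k ω) ^ 2 + c ^ 2)) μ := by
        intro c
        refine Integrable.mono' ((hint k).abs.add (integrable_const |c|))
          (((hXk.pow_const 2).add_const _).sqrt.aestronglyMeasurable)
          (Filter.Eventually.of_forall fun ω => ?_)
        rw [Real.norm_eq_abs, abs_of_nonneg (Real.sqrt_nonneg _)]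
        calc Real.sqrt ((X k ω) ^ 2 + c ^ 2)
            ≤ Real.sqrt ((X k ω) ^ 2) + Real.sqrt (c ^ 2) :=
              sqrt_add_le' (sq_nonneg _) (sq_nonneg _)
          _ = |X k ω| + |c| := by rw [Real.sqrt_sq_eq_abs, Real.sqrt_sq_eq_abs]
      have hYint : Integrable (fun ω => Real.sqrt ((X k ω) ^ 2 + (lam m) ^ 2)) μ :=
        hint_sqc (lam m)
      have hYge : ∀ ω, lam m ≤ Real.sqrt ((X k ω) ^ 2 + (lam m) ^ 2) := by
        intro ω
        calc lam m = Real.sqrt ((lam m) ^ 2) := (Real.sqrt_sq hlam0).symm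
          _ ≤ _ := Real.sqrt_le_sqrt (le_add_of_nonneg_left (sq_nonneg _))
      have hclam : lam m ≤ lam (m + 1) := by
        rw [hlamrec]
        calc lam m = ∫ _ω, lam m ∂μ := by simp
          _ ≤ _ := integral_mono (integrable_const _) hYint hYge
      have hlam1 : 0 ≤ lam (m + 1) := le_trans hlam0 hclam
      -- integrability of √(S (m+1))
      have hS1eq : (fun ω => Real.sqrt (S (m + 1) ω)) =
          fun ω => Real.sqrt ((X k ω) ^ 2 + S m ω) := by
        funext ω; rw [hSsucc k ω]
      have hS1int : Integrable (fun ω => Real.sqrt (S (m + 1) ω)) μ := by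
        rw [hS1eq]
        refine Integrable.mono' ((hint k).abs.add hSint)
          (((hXk.pow_const 2).add (hSmeas m)).sqrt.aestronglyMeasurable)
          (Filter.Eventually.of_forall fun ω => ?_)
        rw [Real.norm_eq_abs, abs_of_nonneg (Real.sqrt_nonneg _)]
        calc Real.sqrt ((X k ω) ^ 2 + S m ω)
            ≤ Real.sqrt ((X k ω) ^ 2) + Real.sqrt (S m ω) :=
              sqrt_add_le' (sq_nonneg _) (hSnn m ω)
          _ = |X k ω| + Real.sqrt (S m ω) := by rw [Real.sqrt_sq_eq_abs]
      -- LOWER BOUND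
      set t : ℝ := ∫ ω, Real.sqrt (S m ω) ∂μ with ht
      have htnn : 0 ≤ t := integral_nonneg fun ω => Real.sqrt_nonneg _
      set D : Ω → ℝ := fun ω => Real.sqrt ((X k ω) ^ 2 + t ^ 2) with hD
      have hDmeas : Measurable D := ((hXk.pow_const 2).add_const _).sqrt
      have hD2 : ∀ ω, D ω ^ 2 = (X k ω) ^ 2 + t ^ 2 := fun ω => Real.sq_sqrt (by positivity)
      have hD0 : ∀ ω, 0 ≤ D ω := fun ω => Real.sqrt_nonneg _
      have hstep1 : lam (m + 1) ≤ ∫ ω, D ω ∂μ := by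
        rw [hlamrec]
        refine integral_mono hYint (hint_sqc t) fun ω => Real.sqrt_le_sqrt ?_
        nlinarith
      set F : Ω × Ω → ℝ :=
        fun p => ((X k p.1) ^ 2 + t * Real.sqrt (S m p.2)) / D p.1 with hF
      have hFeq : ∀ p : Ω × Ω,
          F p = (X k p.1) ^ 2 / D p.1 + (t / D p.1) * Real.sqrt (S m p.2) := by
        intro p; rw [hF]; ring
      have hq1 : Integrable (fun ω => (X k ω) ^ 2 / D ω) μ := by
        refine Integrable.mono' ((hint k).abs.add (integrable_const |t|))
          ((hXk.pow_const 2).div hDmeas).aestronglyMeasurable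
          (Filter.Eventually.of_forall fun ω => ?_)
        have hb : (X k ω) ^ 2 / D ω ≤ D ω := by
          rcases (hD0 ω).eq_or_lt with h | h
          · rw [← h, div_zero]
          · rw [div_le_iff₀ h]; nlinarith [hD2 ω]
        have hDb : D ω ≤ |X k ω| + |t| := by
          calc D ω ≤ Real.sqrt ((X k ω) ^ 2) + Real.sqrt (t ^ 2) :=
                sqrt_add_le' (sq_nonneg _) (sq_nonneg _)
            _ = |X k ω| + |t| := by rw [Real.sqrt_sq_eq_abs, Real.sqrt_sq_eq_abs]
        rw [Real.norm_eq_abs, abs_of_nonneg (div_nonneg (sq_nonneg _) (hD0 ω))]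
        simp only [Pi.add_apply]
        linarith
      have hq2 : Integrable (fun ω => t / D ω) μ := by
        refine Integrable.mono' (integrable_const (1 : ℝ))
          (measurable_const.div hDmeas).aestronglyMeasurable
          (Filter.Eventually.of_forall fun ω => ?_)
        rw [Real.norm_eq_abs, abs_of_nonneg (div_nonneg htnn (hD0 ω))]
        rcases (hD0 ω).eq_or_lt with h | h
        · rw [← h, div_zero]; norm_num
        · rw [div_le_one h]; nlinarith [hD2 ω]
      have hFint : Integrable F (μ.prod μ) := by
        have h1 := hfst hq1
        have h2 := hq2.mul_prod hSint
        exact (h1.add h2).congr (Filter.Eventually.of_forall fun p => (hFeq p).symm)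
      have hFubini : ∫ p, F p ∂(μ.prod μ) = ∫ ω, D ω ∂μ := by
        rw [integral_prod _ hFint]
        refine integral_congr_ae (Filter.Eventually.of_forall fun ω => ?_)
        show (∫ ω', F (ω, ω') ∂μ) = D ω
        have hcur : (fun ω' => F (ω, ω')) =
            fun ω' => (X k ω) ^ 2 / D ω + (t / D ω) * Real.sqrt (S m ω') :=
          funext fun ω' => hFeq (ω, ω')
        rw [hcur, integral_add (integrable_const _) (hSint.const_mul _),
          integral_const, integral_const_mul, ← ht]
        simp only [probReal_univ, one_smul]
        have hcomb : (X k ω) ^ 2 / D ω + (t / D ω) * t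
            = ((X k ω) ^ 2 + t ^ 2) / Real.sqrt ((X k ω) ^ 2 + t ^ 2) := by
          rw [hD]; ring
        rw [hcomb, Real.div_sqrt]
      set G : Ω × Ω → ℝ := fun p => Real.sqrt ((X k p.1) ^ 2 + S m p.2) with hG
      have hGint : Integrable G (μ.prod μ) := by
        refine Integrable.mono' ((hfst (hint k).abs).add (hsnd hSint))
          ((((hXk.comp measurable_fst).pow_const 2).add
            ((hSmeas m).comp measurable_snd)).sqrt.aestronglyMeasurable)
          (Filter.Eventually.of_forall fun p => ?_)
        rw [Real.norm_eq_abs, abs_of_nonneg (Real.sqrt_nonneg _)]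
        calc Real.sqrt ((X k p.1) ^ 2 + S m p.2)
            ≤ Real.sqrt ((X k p.1) ^ 2) + Real.sqrt (S m p.2) :=
              sqrt_add_le' (sq_nonneg _) (hSnn m p.2)
          _ = |X k p.1| + Real.sqrt (S m p.2) := by rw [Real.sqrt_sq_eq_abs]
      have hFG : ∫ p, F p ∂(μ.prod μ) ≤ ∫ p, G p ∂(μ.prod μ) :=
        integral_mono hFint hGint fun p => cs_div_le htnn (hSnn m p.2)
      have hindep_eq : ∫ p, G p ∂(μ.prod μ) = ∫ ω, Real.sqrt (S (m + 1) ω) ∂μ := by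
        have hφ : Continuous (fun q : ℝ × ℝ => Real.sqrt (q.1 + q.2)) :=
          Real.continuous_sqrt.comp (continuous_fst.add continuous_snd)
        have h := indep_integral_eq (μ := μ) (A := fun ω => X k ω ^ 2) (B := S m)
          (hXk.pow_const 2) (hSmeas m) (hindSX k) hφ
        rw [hS1eq]
        exact h.symm
      have hlower : lam (m + 1) ≤ ∫ ω, Real.sqrt (S (m + 1) ω) ∂μ := by
        calc lam (m + 1) ≤ ∫ ω, D ω ∂μ := hstep1
          _ = ∫ p, F p ∂(μ.prod μ) := hFubini.symm
          _ ≤ ∫ p, G p ∂(μ.prod μ) := hFG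
          _ = _ := hindep_eq
      -- UPPER / J BOUND
      have hJ1int : Integrable (fun ω => max (Real.sqrt (S (m + 1) ω) - lam (m + 1)) 0) μ :=
        (hS1int.sub (integrable_const _)).pos_part
      have hJmint : Integrable (fun ω => max (Real.sqrt (S m ω) - lam m) 0) μ :=
        (hSint.sub (integrable_const _)).pos_part
      have hYcint : Integrable
          (fun ω => max (Real.sqrt ((X k ω) ^ 2 + (lam m) ^ 2) - lam (m + 1)) 0) μ :=
        (hYint.sub (integrable_const _)).pos_part
      have hEY : (∫ ω, max (Real.sqrt ((X k ω) ^ 2 + (lam m) ^ 2) - lam (m + 1)) 0 ∂μ)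
          ≤ lam (m + 1) - lam m := by
        rw [integral_posPart_symm hYint hlamrec]
        calc (∫ ω, max (lam (m + 1) - Real.sqrt ((X k ω) ^ 2 + (lam m) ^ 2)) 0 ∂μ)
            ≤ ∫ _ω, (lam (m + 1) - lam m) ∂μ := by
              refine integral_mono (((integrable_const _).sub hYint).pos_part)
                (integrable_const _) fun ω => ?_
              exact max_le (by linarith [hYge ω]) (by linarith)
          _ = lam (m + 1) - lam m := by simp
      have hpoint : ∀ ω, max (Real.sqrt (S (m + 1) ω) - lam (m + 1)) 0
          ≤ max (Real.sqrt (S m ω) - lam m) 0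
            + max (Real.sqrt ((X k ω) ^ 2 + (lam m) ^ 2) - lam (m + 1)) 0 := by
        intro ω
        have hup : Real.sqrt (S (m + 1) ω)
            ≤ Real.sqrt ((X k ω) ^ 2 + (lam m) ^ 2) + max (Real.sqrt (S m ω) - lam m) 0 := by
          rw [hSsucc k ω]
          exact sqrt_upper (hSnn m ω) hlam0
        have h1 : (0:ℝ) ≤ max (Real.sqrt (S m ω) - lam m) 0 := le_max_right _ _
        have h2 : Real.sqrt ((X k ω) ^ 2 + (lam m) ^ 2) - lam (m + 1)
            ≤ max (Real.sqrt ((X k ω) ^ 2 + (lam m) ^ 2) - lam (m + 1)) 0 := le_max_left _ _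
        have h3 : (0:ℝ) ≤ max (Real.sqrt ((X k ω) ^ 2 + (lam m) ^ 2) - lam (m + 1)) 0 :=
          le_max_right _ _
        exact max_le (by linarith) (by linarith)
      have hupper : (∫ ω, max (Real.sqrt (S (m + 1) ω) - lam (m + 1)) 0 ∂μ) ≤ lam (m + 1) := by
        calc (∫ ω, max (Real.sqrt (S (m + 1) ω) - lam (m + 1)) 0 ∂μ)
            ≤ ∫ ω, (max (Real.sqrt (S m ω) - lam m) 0
              + max (Real.sqrt ((X k ω) ^ 2 + (lam m) ^ 2) - lam (m + 1)) 0) ∂μ :=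
              integral_mono hJ1int (hJmint.add hYcint) hpoint
          _ = (∫ ω, max (Real.sqrt (S m ω) - lam m) 0 ∂μ)
              + ∫ ω, max (Real.sqrt ((X k ω) ^ 2 + (lam m) ^ 2) - lam (m + 1)) 0 ∂μ :=
              integral_add hJmint hYcint
          _ ≤ lam m + (lam (m + 1) - lam m) := add_le_add hJ hEY
          _ = lam (m + 1) := by ring
      exact ⟨hS1int, hlam1, hlower, hupper⟩
  obtain ⟨hintn, hn0, hlo, hJn⟩ := key n le_rfl
  have hgoal : (fun ω => Real.sqrt (∑ k : Fin n, (X k ω) ^ 2)) =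
      fun ω => Real.sqrt (S n ω) := by
    funext ω; rw [hSn ω]
  have hposn : Integrable (fun ω => max (Real.sqrt (S n ω) - lam n) 0) μ :=
    (hintn.sub (integrable_const _)).pos_part
  constructor
  · calc lam n ≤ ∫ ω, Real.sqrt (S n ω) ∂μ := hlo
      _ = _ := by rw [hgoal]
  · have h2 : (∫ ω, Real.sqrt (S n ω) ∂μ)
        ≤ ∫ ω, (lam n + max (Real.sqrt (S n ω) - lam n) 0) ∂μ := by
      refine integral_mono hintn ((integrable_const _).add hposn) fun ω => ?_
      have := le_max_left (Real.sqrt (S n ω) - lam n) (0:ℝ)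
      linarith
    have h3 : (∫ ω, (lam n + max (Real.sqrt (S n ω) - lam n) 0) ∂μ)
        = lam n + ∫ ω, max (Real.sqrt (S n ω) - lam n) 0 ∂μ := by
      rw [integral_add (integrable_const _) hposn]
      simp
    calc (∫ ω, Real.sqrt (∑ k : Fin n, (X k ω) ^ 2) ∂μ)
        = ∫ ω, Real.sqrt (S n ω) ∂μ := by rw [hgoal]
      _ ≤ lam n + ∫ ω, max (Real.sqrt (S n ω) - lam n) 0 ∂μ := by rw [← h3]; exact h2
      _ ≤ lam n + lam n := by linarith
      _ = 2 * lam n := by ring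
end
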